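/- There is no homeomorphism h : ℝ³ → ℝ³ such that h(C₁) = C₁ and h(C₂) = C₁ + (5,0,0) (the translate of C₁ by the vector (5,0,0)); that is, the standard Hopf link (C₁, C₂) does not form an unlink. -/

import Mathlib

noncomputable section

/-- ℝ³ with the Euclidean metric. -/
abbrev E3 := EuclideanSpace ℝ (Fin 3)

/-- The standard round unit circle in the x₁x₂-plane. -/
def C1 : Set E3 := {x | ∃ s : ℝ, x = ![Real.cos s, Real.sin s, 0]}

/-- The standard Hopf partner circle. -/
def C2 : Set E3 := {x | ∃ s : ℝ, x = ![1 + Real.cos s, 0, Real.sin s]}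

/-- The vector (5,0,0). -/
def v5 : E3 := WithLp.toLp 2 ![5, 0, 0]

/-- The translate of `C₁` by the vector `(5,0,0)`. -/
def C1' : Set E3 := (fun x => x + v5) '' C1

open Real Set Finset

lemma teles (g : ℕ → ℂ) : ∀ n : ℕ, (∀ k, k ≤ n → g k ≠ 0) →
    (∏ k ∈ Finset.range n, g (k+1) / g k) = g n / g 0 := by
  intro n
  induction n with
  | zero => intro h; simp [div_self (h 0 le_rfl)]
  | succ n ih =>
    intro h
    rw [Finset.prod_range_succ, ih (fun k hk => h k (hk.trans (Nat.le_succ n)))]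
    have h0 := h 0 (Nat.zero_le _)
    have hn := h n (Nat.le_succ n)
    field_simp

lemma no_winding (H : ℝ × ℝ → ℂ) (Hc : Continuous H)
    (Hne : ∀ p : ℝ × ℝ, p ∈ Icc (0:ℝ) 1 ×ˢ Icc (0:ℝ) 1 → H p ≠ 0)
    (Hloop : ∀ t : ℝ, H (t, 1) = H (t, 0))
    (H0 : ∀ s : ℝ, H (0, s) = Complex.exp ((2 * π * s : ℝ) * Complex.I))
    (H1 : ∀ s s' : ℝ, H (1, s) = H (1, s')) : False := by
  have hK : IsCompact (Icc (0:ℝ) 1 ×ˢ Icc (0:ℝ) 1) := isCompact_Icc.prod isCompact_Icc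
  obtain ⟨p₀, hp₀, hmin⟩ := hK.exists_isMinOn ⟨(0,0), by simp⟩
    (continuous_norm.comp Hc).continuousOn
  set m : ℝ := ‖H p₀‖ with hm_def
  have hm : 0 < m := norm_pos_iff.mpr (Hne p₀ hp₀)
  have hmin' : ∀ p ∈ Icc (0:ℝ) 1 ×ˢ Icc (0:ℝ) 1, m ≤ ‖H p‖ :=
    fun p hp => isMinOn_iff.mp hmin p hp
  obtain ⟨δ, hδ, hunif⟩ := Metric.uniformContinuousOn_iff.mp
    (hK.uniformContinuousOn_of_continuous Hc.continuousOn) m hm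
  obtain ⟨n₀, hn₀⟩ := exists_nat_gt (1/δ)
  set n : ℕ := n₀ + 3 with hn_def
  have hn3 : (3:ℝ) ≤ n := by exact_mod_cast Nat.le_add_left 3 n₀
  have hn0 : (0:ℝ) < n := by linarith
  have hnδ : 1 / (n:ℝ) < δ := by
    rw [div_lt_iff₀ hn0]
    have h1 : (n₀:ℝ) ≤ n := by exact_mod_cast Nat.le_add_right n₀ 3
    nlinarith [(div_lt_iff₀ hδ).mp hn₀]
  set u : ℕ → ℝ := fun k => (k:ℝ) / n with hu_def
  have hu_mem : ∀ k, k ≤ n → u k ∈ Icc (0:ℝ) 1 := by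
    intro k hk
    refine ⟨by positivity, ?_⟩
    rw [hu_def, div_le_one hn0]; exact_mod_cast hk
  have hu_step : ∀ k : ℕ, u (k+1) - u k = 1 / n := by
    intro k; rw [hu_def]; push_cast; field_simp; ring
  have key : ∀ t ∈ Icc (0:ℝ) 1, ∀ k < n,
      ‖H (t, u (k+1)) - H (t, u k)‖ < ‖H (t, u k)‖ := by
    intro t ht k hk
    have h1m : ((t, u (k+1)) : ℝ × ℝ) ∈ Icc (0:ℝ) 1 ×ˢ Icc (0:ℝ) 1 :=
      ⟨ht, hu_mem _ (by omega)⟩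
    have h2m : ((t, u k) : ℝ × ℝ) ∈ Icc (0:ℝ) 1 ×ˢ Icc (0:ℝ) 1 :=
      ⟨ht, hu_mem _ (by omega)⟩
    have hd : dist ((t, u (k+1)) : ℝ × ℝ) (t, u k) < δ := by
      rw [Prod.dist_eq]
      have h2 : dist (u (k+1)) (u k) = 1 / n := by
        rw [Real.dist_eq, hu_step k, abs_of_pos (by positivity)]
      simp only [dist_self, h2]
      simpa using hnδ
    calc ‖H (t, u (k+1)) - H (t, u k)‖
        = dist (H (t, u (k+1))) (H (t, u k)) := (Complex.dist_eq _ _).symm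
      _ < m := hunif _ h1m _ h2m hd
      _ ≤ ‖H (t, u k)‖ := hmin' _ h2m
  set q : ℝ → ℕ → ℂ := fun t k => H (t, u (k+1)) / H (t, u k) with hq_def
  have hne' : ∀ t ∈ Icc (0:ℝ) 1, ∀ k, k ≤ n → H (t, u k) ≠ 0 :=
    fun t ht k hk => Hne _ ⟨ht, hu_mem k hk⟩
  have hq_re : ∀ t ∈ Icc (0:ℝ) 1, ∀ k < n, 0 < (q t k).re := by
    intro t ht k hk
    have ha := hne' t ht k hk.le
    have h1 : ‖q t k - 1‖ < 1 := by
      have h2 : q t k - 1 = (H (t, u (k+1)) - H (t, u k)) / H (t, u k) := by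
        simp only [hq_def]; rw [div_sub_one ha]
      rw [h2, norm_div, div_lt_one (norm_pos_iff.mpr ha)]
      exact key t ht k hk
    have h3 := (Complex.abs_re_le_norm (q t k - 1)).trans_lt h1
    have hre : |(q t k).re - 1| < 1 := by simpa using h3
    linarith [(abs_lt.mp hre).1]
  have hq_ne : ∀ t ∈ Icc (0:ℝ) 1, ∀ k < n, q t k ≠ 0 := fun t ht k hk =>
    div_ne_zero (hne' t ht (k+1) (by omega)) (hne' t ht k hk.le)
  set d : ℝ → ℂ := fun t => ∑ k ∈ Finset.range n, Complex.log (q t k) with hd_def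
  -- continuity of im ∘ d on [0,1]
  have hd_cont : ContinuousOn (fun t => (d t).im) (Icc (0:ℝ) 1) := by
    apply Complex.continuous_im.comp_continuousOn
    apply continuousOn_finset_sum
    intro k hk
    rw [Finset.mem_range] at hk
    intro t ht
    have hqc : ContinuousWithinAt (fun t => q t k) (Icc (0:ℝ) 1) t :=
      ((Hc.comp (continuous_id.prodMk continuous_const)).continuousWithinAt).div
        ((Hc.comp (continuous_id.prodMk continuous_const)).continuousWithinAt)
        (hne' t ht k hk.le)
    show ContinuousWithinAt (Complex.log ∘ fun t => q t k) (Icc (0:ℝ) 1) t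
    exact ContinuousAt.comp_continuousWithinAt (f := fun t => q t k) (x := t)
      (continuousAt_clog (Complex.mem_slitPlane_iff.mpr
        (Or.inl (hq_re t ht k hk)))) hqc
  -- d takes values in 2πiℤ on [0,1]
  have hd_val : ∀ t ∈ Icc (0:ℝ) 1, ∃ k : ℤ, (d t).im = k * (2 * π) := by
    intro t ht
    have hexp : Complex.exp (d t) = 1 := by
      show Complex.exp (∑ k ∈ Finset.range n, Complex.log (q t k)) = 1
      rw [Complex.exp_sum]
      have h1 : ∀ k ∈ Finset.range n, Complex.exp (Complex.log (q t k)) = q t k := by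
        intro k hk
        exact Complex.exp_log (hq_ne t ht k (Finset.mem_range.mp hk))
      rw [Finset.prod_congr rfl h1, teles (fun k => H (t, u k)) n (hne' t ht)]
      have hun : u n = 1 := by rw [hu_def]; field_simp
      have hu0 : u 0 = 0 := by simp [hu_def]
      rw [hun, hu0, Hloop t, div_self (by rw [← hu0]; exact hne' t ht 0 (by omega))]
    obtain ⟨k, hk⟩ := Complex.exp_eq_one_iff.mp hexp
    refine ⟨k, ?_⟩
    have : d t = ((k * (2 * π) : ℝ) : ℂ) * Complex.I := by
      rw [hk]; push_cast; ring
    rw [this]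
    simp
  -- value at 0
  have hd0 : (d 0).im = 2 * π := by
    have hterm : ∀ k ∈ Finset.range n, Complex.log (q 0 k) = ((2 * π / n : ℝ) : ℂ) * Complex.I := by
      intro k hk
      have hq0 : q 0 k = Complex.exp (((2 * π / n : ℝ) : ℂ) * Complex.I) := by
        show H (0, u (k+1)) / H (0, u k) = _
        rw [H0, H0, ← Complex.exp_sub]
        congr 1
        have h5 : (2*π*u (k+1) : ℝ) - 2*π*u k = 2*π/n := by
          rw [← mul_sub, hu_step]; ring
        rw [← sub_mul, ← Complex.ofReal_sub, h5]
      rw [hq0, Complex.log_exp]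
      · simp only [Complex.mul_im, Complex.ofReal_re, Complex.I_im, Complex.ofReal_im,
          Complex.I_re, mul_one, mul_zero, add_zero]
        have : 0 < 2 * π / n := by positivity
        linarith [pi_pos]
      · simp only [Complex.mul_im, Complex.ofReal_re, Complex.I_im, Complex.ofReal_im,
          Complex.I_re, mul_one, mul_zero, add_zero]
        rw [div_le_iff₀ hn0]
        nlinarith [pi_pos]
    show (∑ k ∈ Finset.range n, Complex.log (q 0 k)).im = 2 * π
    rw [Finset.sum_congr rfl hterm, Finset.sum_const, Finset.card_range]
    simp only [nsmul_eq_mul, Complex.mul_im, Complex.ofReal_re, Complex.I_im, Complex.ofReal_im,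
      Complex.I_re, Complex.natCast_im, Complex.natCast_re, Complex.mul_re]
    field_simp
    ring
  -- value at 1
  have hd1 : (d 1).im = 0 := by
    have hterm : ∀ k ∈ Finset.range n, Complex.log (q 1 k) = 0 := by
      intro k hk
      show Complex.log (H (1, u (k+1)) / H (1, u k)) = 0
      rw [H1 (u (k+1)) (u k), div_self (hne' 1 (by norm_num) k
        (Finset.mem_range.mp hk).le), Complex.log_one]
    show (∑ k ∈ Finset.range n, Complex.log (q 1 k)).im = 0
    rw [Finset.sum_congr rfl hterm]
    simp
  -- IVT
  have hsub := intermediate_value_Icc' (by norm_num : (0:ℝ) ≤ 1) hd_cont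
  rw [hd0, hd1] at hsub
  have hπ : π ∈ Icc (0:ℝ) (2 * π) := ⟨pi_pos.le, by linarith [pi_pos]⟩
  obtain ⟨t, ht, hdt⟩ := hsub hπ
  obtain ⟨k, hk⟩ := hd_val t ht
  have hdt' : (d t).im = π := hdt
  rw [hdt'] at hk
  have h2k : (2 * (k:ℝ)) = 1 :=
    mul_right_cancel₀ pi_ne_zero (by linarith [hk] : (2*(k:ℝ))*π = 1*π)
  have : (2:ℤ) * k = 1 := by exact_mod_cast h2k
  omega

/-- The defining map of the complement of `C1`. -/
def Fc (x : E3) : ℂ := ((Real.sqrt ((x 0)^2 + (x 1)^2) - 1 : ℝ) : ℂ) + (x 2 : ℝ) * Complex.I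

lemma Fc_cont : Continuous Fc := by
  apply Continuous.add
  · apply Complex.continuous_ofReal.comp
    apply Continuous.sub _ continuous_const
    apply Real.continuous_sqrt.comp
    fun_prop
  · fun_prop

lemma Fc_re (x : E3) : (Fc x).re = Real.sqrt ((x 0)^2 + (x 1)^2) - 1 := by
  simp [Fc]

lemma Fc_im (x : E3) : (Fc x).im = x 2 := by
  simp [Fc]

lemma Fc_eq_zero_iff (x : E3) : Fc x = 0 ↔ x ∈ C1 := by
  constructor
  · intro h
    have hre : Real.sqrt ((x 0)^2 + (x 1)^2) = 1 := by
      have := congrArg Complex.re h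
      rw [Fc_re] at this
      simp at this
      linarith
    have him : x 2 = 0 := by
      have := congrArg Complex.im h
      rw [Fc_im] at this
      simpa using this
    have hsq : (x 0)^2 + (x 1)^2 = 1 := Real.sqrt_eq_one.mp hre
    set z : ℂ := (x 0 : ℂ) + (x 1 : ℂ) * Complex.I with hz
    have habs : ‖z‖ = 1 := by
      rw [hz, Complex.norm_def, Complex.normSq_add_mul_I, hsq, Real.sqrt_one]
    have hz0 : z ≠ 0 := by
      intro h0
      rw [h0] at habs
      simp at habs
    refine ⟨Complex.arg z, ?_⟩
    have hcos : Real.cos (Complex.arg z) = x 0 := by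
      rw [Complex.cos_arg hz0, habs]
      simp [hz]
    have hsin : Real.sin (Complex.arg z) = x 1 := by
      rw [Complex.sin_arg, habs]
      simp [hz]
    funext i
    fin_cases i
    · simpa using hcos.symm
    · simpa using hsin.symm
    · simpa using him
  · rintro ⟨s, hs⟩
    have h0 : x 0 = Real.cos s := by simp [hs]
    have h1 : x 1 = Real.sin s := by simp [hs]
    have h2 : x 2 = 0 := by simp [hs]
    rw [Complex.ext_iff, Fc_re, Fc_im, h0, h1, h2]
    constructor
    · simp [Real.cos_sq_add_sin_sq]
    · simp

lemma C1_coord_le (x : E3) (hx : x ∈ C1) : x 0 ≤ 1 := by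
  obtain ⟨s, hs⟩ := hx
  rw [hs]
  show Real.cos s ≤ 1
  exact Real.cos_le_one s

lemma C1'_coord_ge (y : E3) (hy : y ∈ C1') : 4 ≤ y 0 := by
  obtain ⟨x, ⟨s, hs⟩, rfl⟩ := hy
  show x 0 + v5 0 ≥ 4
  rw [hs]
  show Real.cos s + (5:ℝ) ≥ 4
  linarith [Real.neg_one_le_cos s]

/-- The standard loop in C2. -/
def γ (s : ℝ) : E3 := WithLp.toLp 2 ![1 + Real.cos (2 * π * s), 0, Real.sin (2 * π * s)]

lemma γ_mem (s : ℝ) : γ s ∈ C2 := ⟨2 * π * s, rfl⟩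

lemma γ_cont : Continuous γ := by
  apply (PiLp.continuous_toLp 2 _).comp
  apply continuous_pi
  intro i
  fin_cases i
  · exact continuous_const.add ((Real.continuous_cos).comp (by fun_prop))
  · exact continuous_const
  · exact (Real.continuous_sin).comp (by fun_prop)

lemma γ_loop : γ 1 = γ 0 := by
  ext i
  fin_cases i <;> norm_num [γ]


/-- The standard Hopf link `(C₁, C₂)` is not an unlink: no self-homeomorphism of ℝ³
takes `C₁` to `C₁` and `C₂` to `C₁ + (5,0,0)`. -/
theorem hopf_link_not_unlink :
    ¬ ∃ h : E3 ≃ₜ E3, h '' C1 = C1 ∧ h '' C2 = C1' := by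
  rintro ⟨h, h1, h2⟩
  set c : E3 := h (γ 0) with hc_def
  have hγC1' : ∀ s : ℝ, h (γ s) ∈ C1' := by
    intro s
    rw [← h2]
    exact ⟨γ s, γ_mem s, rfl⟩
  have hc : c ∈ C1' := hγC1' 0
  -- the homotopy
  set H : ℝ × ℝ → ℂ := fun p => Fc (h.symm ((1 - p.1) • h (γ p.2) + p.1 • c)) with hH_def
  have Hc : Continuous H := by
    apply Fc_cont.comp
    apply h.symm.continuous.comp
    exact ((continuous_const.sub continuous_fst).smul
      (h.continuous.comp (γ_cont.comp continuous_snd))).add (continuous_fst.smul continuous_const)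
  have Hne : ∀ p : ℝ × ℝ, p ∈ Icc (0:ℝ) 1 ×ˢ Icc (0:ℝ) 1 → H p ≠ 0 := by
    rintro ⟨t, s⟩ ⟨⟨ht0, ht1⟩, -⟩
    set z : E3 := (1 - t) • h (γ s) + t • c with hz_def
    have hz0 : 4 ≤ z 0 := by
      have e : z 0 = (1 - t) * (h (γ s)) 0 + t * (c 0) := rfl
      have b1 := C1'_coord_ge _ (hγC1' s)
      have b2 := C1'_coord_ge _ hc
      rw [e]; nlinarith
    intro hF0
    have hzC1 : h.symm z ∈ C1 := (Fc_eq_zero_iff _).mp hF0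
    have : z ∈ C1 := by
      rw [← h1]
      have : z = h (h.symm z) := (h.apply_symm_apply z).symm
      exact this ▸ ⟨h.symm z, hzC1, rfl⟩
    linarith [C1_coord_le z this]
  have Hloop : ∀ t : ℝ, H (t, 1) = H (t, 0) := by
    intro t
    show Fc (h.symm ((1 - t) • h (γ 1) + t • c)) = Fc (h.symm ((1 - t) • h (γ 0) + t • c))
    rw [γ_loop]
  have H0 : ∀ s : ℝ, H (0, s) = Complex.exp ((2 * π * s : ℝ) * Complex.I) := by
    intro s
    show Fc (h.symm ((1 - 0) • h (γ s) + (0:ℝ) • c)) = _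
    rw [sub_zero, one_smul, zero_smul, add_zero, h.symm_apply_apply]
    have e0 : (γ s) 0 = 1 + Real.cos (2 * π * s) := rfl
    have e1 : (γ s) 1 = 0 := rfl
    have e2 : (γ s) 2 = Real.sin (2 * π * s) := rfl
    rw [Complex.exp_mul_I]
    unfold Fc
    rw [e0, e1, e2]
    have hs : Real.sqrt ((1 + Real.cos (2 * π * s))^2 + 0^2) = 1 + Real.cos (2 * π * s) := by
      rw [(by ring : (1 + Real.cos (2 * π * s))^2 + (0:ℝ)^2 = (1 + Real.cos (2 * π * s))^2)]
      exact Real.sqrt_sq (by linarith [Real.neg_one_le_cos (2 * π * s)])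
    rw [hs, ← Complex.ofReal_cos, ← Complex.ofReal_sin]
    push_cast
    ring
  have H1 : ∀ s s' : ℝ, H (1, s) = H (1, s') := by
    intro s s'
    show Fc (h.symm ((1 - 1) • h (γ s) + (1:ℝ) • c)) =
      Fc (h.symm ((1 - 1) • h (γ s') + (1:ℝ) • c))
    rw [sub_self, zero_smul, zero_smul]
  exact no_winding H Hc Hne Hloop H0 H1
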